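/- Let ∂¹Ω ≺ ∂²Ω be compactifications of a bounded domain Ω with continuous projection Φ : Ω̄² → Ω̄¹ fixing Ω, and let f : ∂¹Ω → ℝ̄. Then the Perron classes satisfy U_{f∘Φ}(Ω²) = U_f(Ω¹); consequently uP_{Ω¹} f = uP_{Ω²}(f ∘ Φ) and lP_{Ω¹} f = lP_{Ω²}(f ∘ Φ). In particular, f is resolutive with respect to Ω¹ if and only if f ∘ Φ is resolutive with respect to Ω², and then P_{Ω¹} f = P_{Ω²}(f ∘ Φ). -/
import Mathlib


open Filter Set

/-- An extended-real-valued function bounded from below by a real constant. -/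
def BddBelowE {α : Type*} (u : α → EReal) : Prop :=
  ∃ m : ℝ, ∀ y, (m : EReal) ≤ u y

/-- The upper (Perron) class of `f`, relative to the compactification given by the
dense embedding `e : Ω → X`: superharmonic functions (the abstract predicate `SH`),
bounded from below, with `liminf_{Ω ∋ y → x} u(y) ≥ f(x)` at every boundary point
`x ∈ X \ e(Ω)` (only the boundary values of `f : X → ℝ̄` are used). -/
def upperPerronClass {Ω X : Type*} [TopologicalSpace Ω] [TopologicalSpace X]
    (e : Ω → X) (SH : (Ω → EReal) → Prop) (f : X → EReal) : Set (Ω → EReal) :=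
  {u | SH u ∧ BddBelowE u ∧
    ∀ x : X, x ∉ Set.range e → f x ≤ liminf u (Filter.comap e (nhds x))}

/-- The upper Perron solution. -/
noncomputable def uP {Ω X : Type*} [TopologicalSpace Ω] [TopologicalSpace X]
    (e : Ω → X) (SH : (Ω → EReal) → Prop) (f : X → EReal) : Ω → EReal :=
  fun z => ⨅ u ∈ upperPerronClass e SH f, u z

/-- The lower Perron solution `lP f := -uP(-f)`. -/
noncomputable def lP {Ω X : Type*} [TopologicalSpace Ω] [TopologicalSpace X]
    (e : Ω → X) (SH : (Ω → EReal) → Prop) (f : X → EReal) : Ω → EReal :=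
  fun z => - uP e SH (fun x => - f x) z

/-- Auxiliary lemma: the Perron classes coincide. -/
theorem perronClass_comp_eq {Ω X₁ X₂ : Type*} [TopologicalSpace Ω]
    [TopologicalSpace X₁] [T2Space X₁]
    [TopologicalSpace X₂] [CompactSpace X₂]
    (e₁ : Ω → X₁) (e₂ : Ω → X₂)
    (Φ : X₂ → X₁) (hΦc : Continuous Φ) (hΦe : ∀ x, Φ (e₂ x) = e₁ x)
    (hΦbd : ∀ x : X₂, x ∉ Set.range e₂ → Φ x ∉ Set.range e₁)
    (SH : (Ω → EReal) → Prop) (f : X₁ → EReal) :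
    upperPerronClass e₂ SH (f ∘ Φ) = upperPerronClass e₁ SH f := by
  have hce : Φ ∘ e₂ = e₁ := funext hΦe
  ext u
  simp only [upperPerronClass, Set.mem_setOf_eq, and_congr_right_iff]
  intro _ _
  constructor
  · -- hard direction: boundary condition w.r.t. e₂ implies it w.r.t. e₁
    intro h x₁ hx₁
    -- every point of Φ⁻¹ {x₁} is a boundary point of X₂
    have hK : ∀ x₂ : X₂, Φ x₂ = x₁ → x₂ ∉ Set.range e₂ := by
      rintro x₂ hx₂ ⟨y, rfl⟩
      exact hx₁ ⟨y, by rw [← hΦe y, hx₂]⟩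
    refine le_of_forall_lt_imp_le_of_dense fun m hm => ?_
    -- for each x₂ ∈ Φ⁻¹ {x₁}, pick an open neighborhood V on which u > m
    have key : ∀ x₂ : X₂, Φ x₂ = x₁ →
        ∃ V : Set X₂, IsOpen V ∧ x₂ ∈ V ∧ ∀ y, e₂ y ∈ V → m < u y := by
      intro x₂ hx₂
      have hle : f x₁ ≤ liminf u (Filter.comap e₂ (nhds x₂)) := by
        have := h x₂ (hK x₂ hx₂)
        simpa [Function.comp, hx₂] using this
      have hev : ∀ᶠ y in Filter.comap e₂ (nhds x₂), m < u y :=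
        eventually_lt_of_lt_liminf (lt_of_lt_of_le hm hle)
      rcases hev with ⟨t, ht, hsub⟩
      rcases mem_nhds_iff.mp ht with ⟨V, hVt, hVo, hxV⟩
      exact ⟨V, hVo, hxV, fun y hy => hsub (hVt hy)⟩
    choose V hVo hxV hVu using key
    -- the open set G containing the fiber
    set G : Set X₂ := ⋃ (x₂ : X₂) (hx₂ : Φ x₂ = x₁), V x₂ hx₂ with hG
    have hGo : IsOpen G := isOpen_iUnion fun x₂ => isOpen_iUnion fun hx₂ => hVo x₂ hx₂
    have hfiber : ∀ x₂ : X₂, Φ x₂ = x₁ → x₂ ∈ G := fun x₂ hx₂ =>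
      Set.mem_iUnion.mpr ⟨x₂, Set.mem_iUnion.mpr ⟨hx₂, hxV x₂ hx₂⟩⟩
    have hGu : ∀ y, e₂ y ∈ G → m < u y := by
      intro y hy
      rcases Set.mem_iUnion.mp hy with ⟨x₂, hx⟩
      rcases Set.mem_iUnion.mp hx with ⟨hx₂, hyV⟩
      exact hVu x₂ hx₂ y hyV
    -- K = Φ(X₂ \ G) is compact, hence closed, and does not contain x₁
    have hKcpt : IsCompact (Φ '' Gᶜ) := (hGo.isClosed_compl.isCompact).image hΦc
    have hx₁K : x₁ ∉ Φ '' Gᶜ := by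
      rintro ⟨c, hc, hcx⟩
      exact hc (hfiber c hcx)
    have hW : (Φ '' Gᶜ)ᶜ ∈ nhds x₁ :=
      hKcpt.isClosed.isOpen_compl.mem_nhds hx₁K
    have hev₁ : ∀ᶠ y in Filter.comap e₁ (nhds x₁), m < u y := by
      refine Filter.mem_comap.mpr ⟨(Φ '' Gᶜ)ᶜ, hW, fun y hy => ?_⟩
      have : e₂ y ∈ G := by
        by_contra hyG
        exact hy ⟨e₂ y, hyG, hΦe y⟩
      exact hGu y this
    exact le_liminf_of_le (by isBoundedDefault) (hev₁.mono fun y hy => hy.le)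
  · -- easy direction
    intro h x₂ hx₂
    have hle : liminf u (Filter.comap e₁ (nhds (Φ x₂))) ≤
        liminf u (Filter.comap e₂ (nhds x₂)) := by
      refine liminf_le_liminf_of_le ?_
      rw [← hce, ← Filter.comap_comap]
      exact Filter.comap_mono (Filter.tendsto_iff_comap.mp hΦc.continuousAt.tendsto)
    exact (h (Φ x₂) (hΦbd x₂ hx₂)).trans hle

/-- let `∂¹Ω ≺ ∂²Ω` be compactifications `X₁`, `X₂` of the bounded
domain `Ω` with continuous projection `Φ : X₂ → X₁` fixing `Ω` (which maps the
boundary into the boundary), and let `f` be a boundary function for `X₁`.  Then the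
Perron classes satisfy `U_{f∘Φ}(Ω²) = U_f(Ω¹)`; consequently
`uP_{Ω¹} f = uP_{Ω²}(f ∘ Φ)` and `lP_{Ω¹} f = lP_{Ω²}(f ∘ Φ)`.  In particular `f`
is resolutive w.r.t. `Ω¹` iff `f ∘ Φ` is resolutive w.r.t. `Ω²`, and then
`P_{Ω¹} f = P_{Ω²}(f ∘ Φ)`. -/
theorem stmt_19 {Ω X₁ X₂ : Type*} [TopologicalSpace Ω] [T2Space Ω]
    [LocallyCompactSpace Ω] [NoncompactSpace Ω]
    [TopologicalSpace X₁] [CompactSpace X₁] [T2Space X₁]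
    [TopologicalSpace X₂] [CompactSpace X₂] [T2Space X₂]
    (e₁ : Ω → X₁) (he₁ : Topology.IsEmbedding e₁) (hd₁ : DenseRange e₁)
    (e₂ : Ω → X₂) (he₂ : Topology.IsEmbedding e₂) (hd₂ : DenseRange e₂)
    (Φ : X₂ → X₁) (hΦc : Continuous Φ) (hΦe : ∀ x, Φ (e₂ x) = e₁ x)
    (hΦbd : ∀ x : X₂, x ∉ Set.range e₂ → Φ x ∉ Set.range e₁)
    (SH : (Ω → EReal) → Prop)
    (f : X₁ → EReal) :
    upperPerronClass e₂ SH (f ∘ Φ) = upperPerronClass e₁ SH f ∧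
    (∀ z, uP e₂ SH (f ∘ Φ) z = uP e₁ SH f z) ∧
    (∀ z, lP e₂ SH (f ∘ Φ) z = lP e₁ SH f z) ∧
    ((∀ z, uP e₁ SH f z = lP e₁ SH f z) ↔
      (∀ z, uP e₂ SH (f ∘ Φ) z = lP e₂ SH (f ∘ Φ) z)) := by
  have hcls := perronClass_comp_eq e₁ e₂ Φ hΦc hΦe hΦbd SH f
  have hclsneg := perronClass_comp_eq e₁ e₂ Φ hΦc hΦe hΦbd SH (fun x => - f x)
  have huP : ∀ z, uP e₂ SH (f ∘ Φ) z = uP e₁ SH f z := by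
    intro z; unfold uP; rw [hcls]
  have hlP : ∀ z, lP e₂ SH (f ∘ Φ) z = lP e₁ SH f z := by
    intro z
    unfold lP uP
    have : (fun x => - (f ∘ Φ) x) = (fun x => - f x) ∘ Φ := rfl
    rw [this, hclsneg]
  refine ⟨hcls, huP, hlP, ?_⟩
  constructor
  · intro h z; rw [huP z, hlP z]; exact h z
  · intro h z; rw [← huP z, ← hlP z]; exact h z
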